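/- arXiv:2511.20877 — 3 statements merged into one kernel-verified Lean document; each statement's English description precedes it below -/
import Mathlib

section
/- Let $\mathbf{e}_k = \mathbf{Y}_k \mathbf{e}_{k-1}$ where $\mathbf{Y}_1, \dots, \mathbf{Y}_k$ are i.i.d. random $n \times n$ real matrices distributed as $\mathbf{Y}$, independent of the deterministic initial vector $\mathbf{e}_0 \in \mathbb{R}^n$. Then $\mathbb{E}\|\mathbf{e}_k\|^2 \ge \lambda_{\min}(\mathbb{E}[\mathbf{Y}^\top \mathbf{Y}])^k \cdot \|\mathbf{e}_0\|^2$, where $\lambda_{\min}$ denotes the smallest eigenvalue of the positive semidefinite matrix $\mathbb{E}[\mathbf{Y}^\top\mathbf{Y}]$. -/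
open MeasureTheory ProbabilityTheory Matrix Metric
open scoped Kronecker
open scoped RealInnerProductSpace ENNReal

instance matMS {ι κ : Type*} : MeasurableSpace (Matrix ι κ ℝ) :=
  inferInstanceAs (MeasurableSpace (ι → κ → ℝ))

/-- Operator norm (ℓ² → ℓ²) of a square real matrix. -/
noncomputable def opNorm {ι : Type*} [Fintype ι] [DecidableEq ι] (M : Matrix ι ι ℝ) : ℝ :=
  ‖Matrix.toEuclideanCLM (𝕜 := ℝ) M‖

/-- Entrywise expectation of a random matrix. -/
noncomputable def Emat {Ω : Type*} [MeasurableSpace Ω] (μ : Measure Ω)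
    {ι κ : Type*} (X : Ω → Matrix ι κ ℝ) : Matrix ι κ ℝ :=
  Matrix.of fun i j => ∫ ω, X ω i j ∂μ

/-- A square real matrix acting on Euclidean space. -/
noncomputable def matCLM {n : ℕ} (M : Matrix (Fin n) (Fin n) ℝ) :
    EuclideanSpace ℝ (Fin n) →L[ℝ] EuclideanSpace ℝ (Fin n) :=
  Matrix.toEuclideanCLM (𝕜 := ℝ) M

/-! ### Auxiliary lemmas -/

lemma matCLM_mul {n : ℕ} (M N : Matrix (Fin n) (Fin n) ℝ) (x : EuclideanSpace ℝ (Fin n)) :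
    matCLM (M * N) x = matCLM M (matCLM N x) := by
  simp [matCLM, _root_.map_mul]

lemma matCLM_one {n : ℕ} (x : EuclideanSpace ℝ (Fin n)) : matCLM 1 x = x := by
  simp [matCLM, _root_.map_one]

lemma euclid_normsq {n : ℕ} (x : EuclideanSpace ℝ (Fin n)) : ‖x‖ ^ 2 = ∑ i, (x i) ^ 2 := by
  rw [EuclideanSpace.norm_eq, Real.sq_sqrt (by positivity)]
  simp [sq_abs]

lemma matCLM_eigen {n : ℕ} {A : Matrix (Fin n) (Fin n) ℝ} (hA : A.IsHermitian) (i : Fin n) :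
    matCLM A (hA.eigenvectorBasis i) = hA.eigenvalues i • hA.eigenvectorBasis i := by
  have h := hA.mulVec_eigenvectorBasis i
  ext j
  have := congrFun h j
  simpa [matCLM] using this

lemma matCLM_symm {n : ℕ} {A : Matrix (Fin n) (Fin n) ℝ} (hA : A.IsHermitian)
    (x y : EuclideanSpace ℝ (Fin n)) : ⟪matCLM A x, y⟫ = ⟪x, matCLM A y⟫ := by
  have hsym := (Matrix.isHermitian_iff_isSymmetric.mp hA)
  have hx : matCLM A x = Matrix.toEuclideanLin A x := by
    rw [matCLM, ← Matrix.coe_toEuclideanCLM_eq_toEuclideanLin]; rfl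
  have hy : matCLM A y = Matrix.toEuclideanLin A y := by
    rw [matCLM, ← Matrix.coe_toEuclideanCLM_eq_toEuclideanLin]; rfl
  rw [hx, hy]; exact hsym x y

lemma rayleigh_lower {n : ℕ} [NeZero n] {A : Matrix (Fin n) (Fin n) ℝ} (hA : A.IsHermitian)
    (w : EuclideanSpace ℝ (Fin n)) :
    (⨅ i, hA.eigenvalues i) * ‖w‖ ^ 2 ≤ ⟪matCLM A w, w⟫ := by
  set B := hA.eigenvectorBasis with hB
  have h1 : ∀ i, ⟪matCLM A w, B i⟫ = hA.eigenvalues i * ⟪B i, w⟫ := by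
    intro i
    rw [matCLM_symm hA, matCLM_eigen hA i, inner_smul_right, real_inner_comm]
  have h2 : ⟪matCLM A w, w⟫ = ∑ i, hA.eigenvalues i * (⟪B i, w⟫ * ⟪B i, w⟫) := by
    rw [← B.sum_inner_mul_inner (matCLM A w) w]
    exact Finset.sum_congr rfl fun i _ => by rw [h1, mul_assoc]
  have h3 : ‖w‖ ^ 2 = ∑ i, ⟪B i, w⟫ * ⟪B i, w⟫ := by
    rw [← real_inner_self_eq_norm_sq, ← B.sum_inner_mul_inner w w]
    exact Finset.sum_congr rfl fun i _ => by rw [real_inner_comm w (B i)]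
  rw [h2, h3, Finset.mul_sum]
  refine Finset.sum_le_sum fun i _ => ?_
  exact mul_le_mul_of_nonneg_right (ciInf_le (Finite.bddBelow_range _) i) (mul_self_nonneg _)

lemma normsq_expand {n : ℕ} (M : Matrix (Fin n) (Fin n) ℝ) (w : EuclideanSpace ℝ (Fin n)) :
    ‖matCLM M w‖ ^ 2 = ∑ j, ∑ l, (w j * w l) * ((Mᵀ * M) j l) := by
  have h0 : ‖matCLM M w‖ ^ 2 = ∑ i, (∑ j, M i j * w j) ^ 2 := euclid_normsq _
  rw [h0]
  simp only [sq, Finset.sum_mul_sum, Matrix.mul_apply, Matrix.transpose_apply, Finset.mul_sum]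
  rw [Finset.sum_comm]
  refine Finset.sum_congr rfl fun j _ => ?_
  rw [Finset.sum_comm]
  refine Finset.sum_congr rfl fun l _ => ?_
  rw [Finset.sum_mul]
  exact Finset.sum_congr rfl fun i _ => by ring

lemma inner_matCLM_expand {n : ℕ} (A : Matrix (Fin n) (Fin n) ℝ) (w : EuclideanSpace ℝ (Fin n)) :
    ⟪matCLM A w, w⟫ = ∑ j, ∑ l, (w j * w l) * A j l := by
  have h : ⟪matCLM A w, w⟫ = ∑ j, (matCLM A w) j * w j := by
    simp [PiLp.inner_apply, RCLike.inner_apply, conj_trivial]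
    exact Finset.sum_congr rfl fun _ _ => mul_comm _ _
  rw [h]
  refine Finset.sum_congr rfl fun j _ => ?_
  have h2 : (matCLM A w) j = ∑ l, A j l * w l := rfl
  rw [h2, Finset.sum_mul]
  exact Finset.sum_congr rfl fun l _ => by ring

lemma integrable_normsq {Ω : Type*} [MeasurableSpace Ω] {μ : Measure Ω} {n : ℕ}
    {Z : Ω → Matrix (Fin n) (Fin n) ℝ}
    (hint : ∀ i j, Integrable (fun ω => ((Z ω)ᵀ * Z ω) i j) μ) (w : EuclideanSpace ℝ (Fin n)) :
    Integrable (fun ω => ‖matCLM (Z ω) w‖ ^ 2) μ := by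
  simp_rw [normsq_expand]
  exact integrable_finset_sum _ fun j _ =>
    integrable_finset_sum _ fun l _ => (hint j l).const_mul _

lemma integral_normsq {Ω : Type*} [MeasurableSpace Ω] {μ : Measure Ω} {n : ℕ}
    {Z : Ω → Matrix (Fin n) (Fin n) ℝ}
    (hint : ∀ i j, Integrable (fun ω => ((Z ω)ᵀ * Z ω) i j) μ) (w : EuclideanSpace ℝ (Fin n)) :
    ∫ ω, ‖matCLM (Z ω) w‖ ^ 2 ∂μ = ⟪matCLM (Emat μ fun ω => (Z ω)ᵀ * Z ω) w, w⟫ := by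
  rw [inner_matCLM_expand]
  calc ∫ ω, ‖matCLM (Z ω) w‖ ^ 2 ∂μ
      = ∫ ω, ∑ j, ∑ l, (w j * w l) * (((Z ω)ᵀ * Z ω) j l) ∂μ := by simp_rw [normsq_expand]
    _ = ∑ j, ∑ l, ∫ ω, (w j * w l) * (((Z ω)ᵀ * Z ω) j l) ∂μ := by
        rw [integral_finset_sum _ fun j _ =>
          integrable_finset_sum _ fun l _ => (hint j l).const_mul _]
        exact Finset.sum_congr rfl fun j _ =>
          integral_finset_sum _ fun l _ => (hint j l).const_mul _
    _ = ∑ j, ∑ l, (w j * w l) * ((Emat μ fun ω => (Z ω)ᵀ * Z ω) j l) := by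
        refine Finset.sum_congr rfl fun j _ => Finset.sum_congr rfl fun l _ => ?_
        rw [integral_const_mul]; rfl

lemma measurable_entry {ι κ : Type*} (i : ι) (j : κ) :
    Measurable fun M : Matrix ι κ ℝ => M i j :=
  (measurable_pi_apply j).comp (measurable_pi_apply i)

lemma measurable_matmul {n : ℕ} :
    Measurable fun p : Matrix (Fin n) (Fin n) ℝ × Matrix (Fin n) (Fin n) ℝ => p.1 * p.2 := by
  refine measurable_pi_lambda _ fun i => measurable_pi_lambda _ fun j => ?_
  simp only [Matrix.mul_apply]
  exact Finset.measurable_sum _ fun l _ =>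
    ((measurable_entry i l).comp measurable_fst).mul ((measurable_entry l j).comp measurable_snd)

lemma measurable_normsq_matCLM {n : ℕ} (w : EuclideanSpace ℝ (Fin n)) :
    Measurable fun M : Matrix (Fin n) (Fin n) ℝ => ‖matCLM M w‖ ^ 2 := by
  have h : ∀ M : Matrix (Fin n) (Fin n) ℝ, ‖matCLM M w‖ ^ 2 = ∑ i, (∑ j, M i j * w j) ^ 2 :=
    fun M => euclid_normsq _
  simp_rw [h]
  exact Finset.measurable_sum _ fun i _ =>
    (Finset.measurable_sum _ fun j _ => (measurable_entry i j).mul_const _).pow_const 2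

/-- ordered product `f m * f (m-1) * ⋯ * f 1`. -/
def Q {n : ℕ} : ℕ → (ℕ → Matrix (Fin n) (Fin n) ℝ) → Matrix (Fin n) (Fin n) ℝ
  | 0, _ => 1
  | (m+1), f => f (m+1) * Q m f

lemma Q_congr {n : ℕ} (m : ℕ) {f g : ℕ → Matrix (Fin n) (Fin n) ℝ}
    (h : ∀ i, i ≤ m → f i = g i) : Q m f = Q m g := by
  induction m with
  | zero => rfl
  | succ m ih => simp only [Q, h (m+1) le_rfl, ih fun i hi => h i (hi.trans (Nat.le_succ m))]

lemma measurable_Q_comp {n : ℕ} {α : Type*} [MeasurableSpace α] (m : ℕ)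
    (g : ℕ → α → Matrix (Fin n) (Fin n) ℝ) (hg : ∀ i, Measurable (g i)) :
    Measurable fun a => Q m (fun i => g i a) := by
  induction m with
  | zero => exact measurable_const
  | succ m ih =>
    have h : (fun a => Q (m+1) (fun i => g i a))
        = (fun p : _ × _ => p.1 * p.2) ∘ (fun a => (g (m+1) a, Q m (fun i => g i a))) := rfl
    rw [h]
    exact measurable_matmul.comp ((hg (m+1)).prodMk ih)

lemma indep_QY {Ω : Type*} [MeasurableSpace Ω] {μ : Measure Ω} {n : ℕ}
    {Y : ℕ → Ω → Matrix (Fin n) (Fin n) ℝ} (hmeas : ∀ j, Measurable (Y j))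
    (hindep : iIndepFun Y μ) (j : ℕ) :
    IndepFun (fun ω => Q j (fun i => Y i ω)) (Y (j+1)) μ := by
  classical
  set S : Finset ℕ := Finset.range (j+1) with hS
  have hST : Disjoint S ({j+1} : Finset ℕ) := by
    simp [hS, Finset.disjoint_singleton_right, Finset.mem_range]
  have h := hindep.indepFun_finset S {j+1} hST hmeas
  have hφ : Measurable fun h : {x // x ∈ S} → Matrix (Fin n) (Fin n) ℝ =>
      Q j (fun i => if hi : i ∈ S then h ⟨i, hi⟩ else 1) := by
    refine measurable_Q_comp j _ fun i => ?_
    by_cases hi : i ∈ S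
    · simp only [dif_pos hi]; exact measurable_pi_apply _
    · simp only [dif_neg hi]; exact measurable_const
  have hψ : Measurable fun h : {x // x ∈ ({j+1} : Finset ℕ)} → Matrix (Fin n) (Fin n) ℝ =>
      h ⟨j+1, Finset.mem_singleton_self _⟩ := measurable_pi_apply _
  have h2 := h.comp hφ hψ
  have hl2 : ((fun h : {x // x ∈ S} → Matrix (Fin n) (Fin n) ℝ =>
      Q j (fun i => if hi : i ∈ S then h ⟨i, hi⟩ else 1)) ∘ (fun a (i : {x // x ∈ S}) => Y i a))
      = fun ω => Q j (fun i => Y i ω) := by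
    funext ω
    exact Q_congr j fun i hi => dif_pos (by simp [hS, Finset.mem_range]; omega)
  rw [hl2] at h2
  exact h2

/-- Expected-error lower bound for linear stochastic iterative methods:
`𝔼‖e_k‖² ≥ λ_min(𝔼[Yᵀ Y])ᵏ ‖e₀‖²`. -/
theorem stmt2 {Ω : Type*} [MeasurableSpace Ω] (μ : Measure Ω) [IsProbabilityMeasure μ]
    {n : ℕ} (k : ℕ) (Y : ℕ → Ω → Matrix (Fin n) (Fin n) ℝ)
    (hmeas : ∀ j, Measurable (Y j))
    (hindep : iIndepFun Y μ)
    (hident : ∀ j, μ.map (Y j) = μ.map (Y 1))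
    (hint : ∀ i j, Integrable (fun ω => ((Y 1 ω)ᵀ * Y 1 ω) i j) μ)
    (hherm : (Emat μ fun ω => (Y 1 ω)ᵀ * Y 1 ω).IsHermitian)
    (e₀ : EuclideanSpace ℝ (Fin n)) (e : ℕ → Ω → EuclideanSpace ℝ (Fin n))
    (he0 : ∀ ω, e 0 ω = e₀)
    (herec : ∀ ω, ∀ j, 1 ≤ j → j ≤ k → e j ω = matCLM (Y j ω) (e (j - 1) ω))
    (hintk : Integrable (fun ω => ‖e k ω‖ ^ 2) μ) :
    (⨅ i, hherm.eigenvalues i) ^ k * ‖e₀‖ ^ 2 ≤ ∫ ω, ‖e k ω‖ ^ 2 ∂μ := by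
  rcases Nat.eq_zero_or_pos n with hn | hn
  · subst hn
    have he : ‖e₀‖ = 0 := by
      rw [EuclideanSpace.norm_eq]; simp
    rw [he]
    simpa using integral_nonneg (μ := μ) fun ω => by positivity
  haveI : NeZero n := ⟨hn.ne'⟩
  set lam := ⨅ i, hherm.eigenvalues i with hlam
  -- the key one-step bound
  have hkey : ∀ w : EuclideanSpace ℝ (Fin n),
      lam * ‖w‖ ^ 2 ≤ ∫ ω, ‖matCLM (Y 1 ω) w‖ ^ 2 ∂μ := fun w => by
    rw [integral_normsq hint w]
    exact rayleigh_lower hherm w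
  -- nonnegativity of lam
  have hlam0 : 0 ≤ lam := by
    refine le_ciInf fun i => ?_
    set B := hherm.eigenvectorBasis with hB
    have h1 : ⟪matCLM (Emat μ fun ω => (Y 1 ω)ᵀ * Y 1 ω) (B i), B i⟫ = hherm.eigenvalues i := by
      rw [matCLM_eigen hherm i, real_inner_smul_left, real_inner_self_eq_norm_sq,
        B.orthonormal.1 i]
      simp
    have h2 := integral_normsq (μ := μ) hint (B i)
    rw [h1] at h2
    rw [← h2]
    exact integral_nonneg fun ω => by positivity
  -- main lintegral claim
  have claim : ∀ j, ENNReal.ofReal (lam ^ j * ‖e₀‖ ^ 2)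
      ≤ ∫⁻ ω, ENNReal.ofReal (‖matCLM (Q j (fun i => Y i ω)) e₀‖ ^ 2) ∂μ := by
    intro j
    induction j with
    | zero =>
      have h0 : ∀ ω : Ω, matCLM (Q 0 (fun i => Y i ω)) e₀ = e₀ := fun ω => matCLM_one e₀
      simp only [h0, pow_zero, one_mul, lintegral_const, measure_univ, mul_one]
      exact le_rfl
    | succ j ih =>
      set P : Ω → Matrix (Fin n) (Fin n) ℝ := fun ω => Q j (fun i => Y i ω) with hP'
      have hP : Measurable P := measurable_Q_comp j Y hmeas
      have hind := indep_QY hmeas hindep j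
      have hpair := (indepFun_iff_map_prod_eq_prod_map_map hP.aemeasurable
        (hmeas (j+1)).aemeasurable).mp hind
      set ν := μ.map (Y (j+1)) with hν
      set ρ := μ.map P with hρ
      haveI : IsProbabilityMeasure ν := Measure.isProbabilityMeasure_map (hmeas (j+1)).aemeasurable
      haveI : IsProbabilityMeasure ρ := Measure.isProbabilityMeasure_map hP.aemeasurable
      set G : Matrix (Fin n) (Fin n) ℝ → ℝ≥0∞ :=
        fun M => ENNReal.ofReal (‖matCLM M e₀‖ ^ 2) with hG'
      have hG : Measurable G := ENNReal.measurable_ofReal.comp (measurable_normsq_matCLM e₀)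
      set F : Matrix (Fin n) (Fin n) ℝ × Matrix (Fin n) (Fin n) ℝ → ℝ≥0∞ :=
        fun p => G (p.2 * p.1) with hF'
      have hF : Measurable F :=
        hG.comp (measurable_matmul.comp (measurable_snd.prodMk measurable_fst))
      have hinner : ∀ z : Matrix (Fin n) (Fin n) ℝ,
          ENNReal.ofReal lam * G z ≤ ∫⁻ x, F (z, x) ∂ν := by
        intro z
        set w : EuclideanSpace ℝ (Fin n) := matCLM z e₀ with hw
        have hFz : ∀ x : Matrix (Fin n) (Fin n) ℝ,
            F (z, x) = ENNReal.ofReal (‖matCLM x w‖ ^ 2) := by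
          intro x; simp only [hF', hG', hw, matCLM_mul]
        simp_rw [hFz]
        have hmap : ν = μ.map (Y 1) := hident (j+1)
        have hGw : Measurable fun M : Matrix (Fin n) (Fin n) ℝ =>
            ENNReal.ofReal (‖matCLM M w‖ ^ 2) :=
          ENNReal.measurable_ofReal.comp (measurable_normsq_matCLM w)
        rw [hmap, lintegral_map hGw (hmeas 1)]
        rw [← ofReal_integral_eq_lintegral_ofReal (integrable_normsq hint w)
          (ae_of_all _ fun ω => by positivity)]
        rw [hG', ← ENNReal.ofReal_mul hlam0]
        exact ENNReal.ofReal_le_ofReal (hkey w)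
      calc ENNReal.ofReal (lam ^ (j+1) * ‖e₀‖ ^ 2)
          = ENNReal.ofReal lam * ENNReal.ofReal (lam ^ j * ‖e₀‖ ^ 2) := by
            rw [← ENNReal.ofReal_mul hlam0]
            ring_nf
        _ ≤ ENNReal.ofReal lam * ∫⁻ ω, G (P ω) ∂μ := mul_le_mul_right ih _
        _ = ENNReal.ofReal lam * ∫⁻ z, G z ∂ρ := by rw [hρ, lintegral_map hG hP]
        _ = ∫⁻ z, ENNReal.ofReal lam * G z ∂ρ := (lintegral_const_mul _ hG).symm
        _ ≤ ∫⁻ z, ∫⁻ x, F (z, x) ∂ν ∂ρ := lintegral_mono hinner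
        _ = ∫⁻ p, F p ∂(ρ.prod ν) := (lintegral_prod F hF.aemeasurable).symm
        _ = ∫⁻ p, F p ∂(μ.map fun ω => (P ω, Y (j+1) ω)) := by rw [hpair]
        _ = ∫⁻ ω, F (P ω, Y (j+1) ω) ∂μ := lintegral_map hF (hP.prodMk (hmeas (j+1)))
        _ = ∫⁻ ω, ENNReal.ofReal (‖matCLM (Q (j+1) (fun i => Y i ω)) e₀‖ ^ 2) ∂μ := by
            refine lintegral_congr fun ω => ?_
            simp only [hF', hG', Q, matCLM_mul]
            rfl
  -- identify e k with the matrix product applied to e₀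
  have hek : ∀ j, j ≤ k → ∀ ω, e j ω = matCLM (Q j (fun i => Y i ω)) e₀ := by
    intro j
    induction j with
    | zero => intro _ ω; rw [he0 ω, Q]; exact (matCLM_one e₀).symm
    | succ j ih =>
      intro hj ω
      rw [herec ω (j+1) (Nat.succ_le_succ (Nat.zero_le j)) hj]
      simp only [Nat.add_sub_cancel]
      rw [ih (Nat.le_of_succ_le hj) ω]
      rw [← matCLM_mul]
      rfl
  have main := claim k
  have hrw : (fun ω => ENNReal.ofReal (‖matCLM (Q k (fun i => Y i ω)) e₀‖ ^ 2))
      = fun ω => ENNReal.ofReal (‖e k ω‖ ^ 2) := by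
    funext ω; rw [hek k le_rfl ω]
  rw [hrw] at main
  have hnn : 0 ≤ lam ^ k * ‖e₀‖ ^ 2 := mul_nonneg (pow_nonneg hlam0 k) (by positivity)
  have hfin : (∫⁻ ω, ENNReal.ofReal (‖e k ω‖ ^ 2) ∂μ) ≠ ⊤ := by
    have h2 := hintk.2
    rw [HasFiniteIntegral] at h2
    have heq : ∀ ω : Ω, ‖(‖e k ω‖ ^ 2 : ℝ)‖ₑ = ENNReal.ofReal (‖e k ω‖ ^ 2) :=
      fun ω => Real.enorm_eq_ofReal (by positivity)
    simp_rw [heq] at h2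
    exact h2.ne
  have heq2 : ∫ ω, ‖e k ω‖ ^ 2 ∂μ = (∫⁻ ω, ENNReal.ofReal (‖e k ω‖ ^ 2) ∂μ).toReal :=
    integral_eq_lintegral_of_nonneg_ae (ae_of_all _ fun ω => by positivity)
      hintk.aestronglyMeasurable
  rw [heq2]
  calc lam ^ k * ‖e₀‖ ^ 2 = (ENNReal.ofReal (lam ^ k * ‖e₀‖ ^ 2)).toReal :=
        (ENNReal.toReal_ofReal hnn).symm
    _ ≤ (∫⁻ ω, ENNReal.ofReal (‖e k ω‖ ^ 2) ∂μ).toReal := ENNReal.toReal_mono hfin main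
end

section
/- Let $\mathbf{e}_k = \mathbf{Y}_k \mathbf{e}_{k-1}$ where $\mathbf{Y}_1,\dots,\mathbf{Y}_k$ are i.i.d. copies of a random $n\times n$ matrix $\mathbf{Y}$, independent of the deterministic initial vector $\mathbf{e}_0 \in \mathbb{R}^n$. For each positive integer $p$, define $\mu_p = \|\mathbb{E}[(\mathbf{Y}^\top\mathbf{Y})^{\otimes p}]\|$ (operator norm of the expected $p$-fold Kronecker power). Then $\mathbb{E}\|\mathbf{e}_k\|^{2p} \le \mu_p^k \cdot \|\mathbf{e}_0\|^{2p}$. -/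
open MeasureTheory ProbabilityTheory Matrix Metric
open scoped Kronecker

/-- `p`-fold Kronecker (tensor) power of a square matrix, indexed by `Fin p → Fin n`. -/
noncomputable def kpow {n : ℕ} (M : Matrix (Fin n) (Fin n) ℝ) (p : ℕ) :
    Matrix (Fin p → Fin n) (Fin p → Fin n) ℝ :=
  Matrix.of fun f g => ∏ j, M (f j) (g j)

/- ### Auxiliary deterministic lemmas -/

lemma matCLM_apply_coord {n : ℕ} (M : Matrix (Fin n) (Fin n) ℝ) (v : EuclideanSpace ℝ (Fin n))
    (i : Fin n) : matCLM M v i = ∑ a, M i a * v a := by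
  have h := congrFun (Matrix.ofLp_toEuclideanCLM (𝕜 := ℝ) M v) i
  exact h

lemma euclid_normsq_s4 {ι : Type*} [Fintype ι] (v : EuclideanSpace ℝ ι) :
    ‖v‖ ^ 2 = ∑ i, v i ^ 2 := by
  rw [EuclideanSpace.norm_eq, Real.sq_sqrt (by positivity)]
  simp [Real.norm_eq_abs, sq_abs]

lemma coord_le_norm {ι : Type*} [Fintype ι] (v : EuclideanSpace ℝ ι) (a : ι) :
    |v a| ≤ ‖v‖ := by
  have h : v a ^ 2 ≤ ‖v‖ ^ 2 := by
    rw [euclid_normsq_s4]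
    exact Finset.single_le_sum (f := fun i => v i ^ 2) (fun i _ => by positivity)
      (Finset.mem_univ a)
  calc |v a| = Real.sqrt (v a ^ 2) := by rw [Real.sqrt_sq_eq_abs]
    _ ≤ Real.sqrt (‖v‖ ^ 2) := Real.sqrt_le_sqrt h
    _ = ‖v‖ := by rw [Real.sqrt_sq (norm_nonneg _)]

lemma quad_bound {ι : Type*} [Fintype ι] [DecidableEq ι] (M : Matrix ι ι ℝ)
    (w : EuclideanSpace ℝ ι) :
    ∑ f, ∑ g, M f g * (w f * w g) ≤ opNorm M * ‖w‖ ^ 2 := by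
  have h1 : ∑ f, ∑ g, M f g * (w f * w g)
      = inner ℝ (Matrix.toEuclideanCLM (𝕜 := ℝ) M w) w := by
    have hc : ∀ f, (Matrix.toEuclideanCLM (𝕜 := ℝ) M w) f = ∑ g, M f g * w g := by
      intro f
      have h := congrFun (Matrix.ofLp_toEuclideanCLM (𝕜 := ℝ) M w) f
      exact h
    simp only [PiLp.inner_apply, RCLike.inner_apply, conj_trivial, hc, Finset.sum_mul, Finset.mul_sum]
    exact Finset.sum_congr rfl fun f _ => Finset.sum_congr rfl fun g _ => by ring
  rw [h1, sq]
  calc inner ℝ (Matrix.toEuclideanCLM (𝕜 := ℝ) M w) w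
      ≤ ‖Matrix.toEuclideanCLM (𝕜 := ℝ) M w‖ * ‖w‖ := real_inner_le_norm _ _
    _ ≤ (opNorm M * ‖w‖) * ‖w‖ := by
        gcongr; exact (Matrix.toEuclideanCLM (𝕜 := ℝ) M).le_opNorm w
    _ = opNorm M * (‖w‖ * ‖w‖) := by ring

lemma norm_sq_expand {n : ℕ} (A : Matrix (Fin n) (Fin n) ℝ) (v : EuclideanSpace ℝ (Fin n)) :
    ‖matCLM A v‖ ^ 2 = ∑ q : Fin n × Fin n, (Aᵀ * A) q.1 q.2 * (v q.1 * v q.2) := by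
  rw [euclid_normsq_s4]
  have h1 : ∀ i, (matCLM A v i) ^ 2 = ∑ a, ∑ b, (A i a * A i b) * (v a * v b) := by
    intro i
    rw [matCLM_apply_coord, sq, Finset.sum_mul_sum]
    exact Finset.sum_congr rfl fun a _ => Finset.sum_congr rfl fun b _ => by ring
  simp only [h1]
  rw [Finset.sum_comm]
  rw [Fintype.sum_prod_type]
  refine Finset.sum_congr rfl fun a _ => ?_
  rw [Finset.sum_comm]
  refine Finset.sum_congr rfl fun b _ => ?_
  rw [← Finset.sum_mul, Matrix.mul_apply]
  simp [Matrix.transpose_apply]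

lemma norm_pow_expand {n p : ℕ} (A : Matrix (Fin n) (Fin n) ℝ) (v : EuclideanSpace ℝ (Fin n)) :
    ‖matCLM A v‖ ^ (2 * p) = ∑ f : Fin p → Fin n, ∑ g : Fin p → Fin n,
      kpow (Aᵀ * A) p f g * ((∏ j, v (f j)) * (∏ j, v (g j))) := by
  rw [pow_mul, norm_sq_expand, Fintype.sum_pow]
  rw [← (Equiv.arrowProdEquivProdArrow (Fin p) (fun _ => Fin n) (fun _ => Fin n)).symm.sum_comp]
  rw [Fintype.sum_prod_type]
  refine Finset.sum_congr rfl fun f _ => Finset.sum_congr rfl fun g _ => ?_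
  simp only [Equiv.arrowProdEquivProdArrow, Equiv.coe_fn_symm_mk]
  rw [kpow, Matrix.of_apply, ← Finset.prod_mul_distrib, ← Finset.prod_mul_distrib]

lemma quad_bound' {n p : ℕ} (M : Matrix (Fin p → Fin n) (Fin p → Fin n) ℝ)
    (v : EuclideanSpace ℝ (Fin n)) :
    ∑ f, ∑ g, M f g * ((∏ j, v (f j)) * (∏ j, v (g j))) ≤ opNorm M * ‖v‖ ^ (2 * p) := by
  set w : EuclideanSpace ℝ (Fin p → Fin n) :=
    (WithLp.equiv 2 ((Fin p → Fin n) → ℝ)).symm (fun f => ∏ j, v (f j)) with hw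
  have hwf : ∀ f, w f = ∏ j, v (f j) := fun f => rfl
  have hnorm : ‖w‖ ^ 2 = ‖v‖ ^ (2 * p) := by
    rw [euclid_normsq_s4, pow_mul, euclid_normsq_s4, Fintype.sum_pow]
    exact Finset.sum_congr rfl fun f _ => by rw [hwf, ← Finset.prod_pow]
  calc ∑ f, ∑ g, M f g * ((∏ j, v (f j)) * (∏ j, v (g j)))
      = ∑ f, ∑ g, M f g * (w f * w g) := by simp only [hwf]
    _ ≤ opNorm M * ‖w‖ ^ 2 := quad_bound M w
    _ = opNorm M * ‖v‖ ^ (2 * p) := by rw [hnorm]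

/- ### Deterministic evolution map -/

noncomputable def evec {n : ℕ} (e₀ : EuclideanSpace ℝ (Fin n)) :
    ℕ → (ℕ → Matrix (Fin n) (Fin n) ℝ) → EuclideanSpace ℝ (Fin n)
  | 0, _ => e₀
  | (j+1), Ys => matCLM (Ys (j+1)) (evec e₀ j Ys)

lemma evec_congr {n : ℕ} (e₀ : EuclideanSpace ℝ (Fin n)) (j : ℕ)
    {Ys Ys' : ℕ → Matrix (Fin n) (Fin n) ℝ} (h : ∀ i, i ≤ j → Ys i = Ys' i) :
    evec e₀ j Ys = evec e₀ j Ys' := by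
  induction j with
  | zero => rfl
  | succ j ih =>
    simp only [evec]
    rw [h (j+1) le_rfl, ih (fun i hi => h i (hi.trans (Nat.le_succ j)))]

lemma matrix_entry_meas {n : ℕ} (a b : Fin n) :
    Measurable (fun A : Matrix (Fin n) (Fin n) ℝ => A a b) := by
  exact (measurable_pi_apply b).comp (measurable_pi_apply a)

lemma evec_meas {n : ℕ} (e₀ : EuclideanSpace ℝ (Fin n)) (j : ℕ) (a : Fin n) :
    Measurable (fun Ys : ℕ → Matrix (Fin n) (Fin n) ℝ => evec e₀ j Ys a) := by
  induction j generalizing a with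
  | zero => exact (measurable_const : Measurable fun _ : ℕ → Matrix (Fin n) (Fin n) ℝ => e₀ a)
  | succ j ih =>
    have h : (fun Ys : ℕ → Matrix (Fin n) (Fin n) ℝ => evec e₀ (j+1) Ys a)
        = fun Ys => ∑ b, Ys (j+1) a b * evec e₀ j Ys b := by
      funext Ys; simp only [evec]; exact matCLM_apply_coord _ _ _
    rw [h]
    refine Finset.measurable_sum _ fun b _ => Measurable.mul ?_ (ih b)
    exact (matrix_entry_meas a b).comp (measurable_pi_apply (j+1))

lemma kentry_meas {n p : ℕ} (f g : Fin p → Fin n) :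
    Measurable (fun A : Matrix (Fin n) (Fin n) ℝ => kpow (Aᵀ * A) p f g) := by
  have h : (fun A : Matrix (Fin n) (Fin n) ℝ => kpow (Aᵀ * A) p f g)
      = fun A => ∏ j, ∑ i, A i (f j) * A i (g j) := by
    funext A
    simp only [kpow, Matrix.of_apply, Matrix.mul_apply, Matrix.transpose_apply]
  rw [h]
  exact Finset.measurable_prod _ fun j _ => Finset.measurable_sum _ fun i _ =>
    (matrix_entry_meas i (f j)).mul (matrix_entry_meas i (g j))

/-- Higher-moment bound: `𝔼‖e_k‖^{2p} ≤ μ_pᵏ ‖e₀‖^{2p}` with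
`μ_p = ‖𝔼[(YᵀY)^{⊗p}]‖`. -/
theorem stmt4 {Ω : Type*} [MeasurableSpace Ω] (μ : Measure Ω) [IsProbabilityMeasure μ]
    {n : ℕ} (k p : ℕ) (hp : 0 < p) (Y : ℕ → Ω → Matrix (Fin n) (Fin n) ℝ)
    (hmeas : ∀ j, Measurable (Y j))
    (hindep : iIndepFun Y μ)
    (hident : ∀ j, μ.map (Y j) = μ.map (Y 1))
    (hint : ∀ f g, Integrable (fun ω => kpow ((Y 1 ω)ᵀ * Y 1 ω) p f g) μ)
    (e₀ : EuclideanSpace ℝ (Fin n)) (e : ℕ → Ω → EuclideanSpace ℝ (Fin n))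
    (he0 : ∀ ω, e 0 ω = e₀)
    (herec : ∀ ω, ∀ j, 1 ≤ j → j ≤ k → e j ω = matCLM (Y j ω) (e (j - 1) ω))
    (hintk : Integrable (fun ω => ‖e k ω‖ ^ (2 * p)) μ) :
    ∫ ω, ‖e k ω‖ ^ (2 * p) ∂μ
      ≤ opNorm (Emat μ fun ω => kpow ((Y 1 ω)ᵀ * Y 1 ω) p) ^ k * ‖e₀‖ ^ (2 * p) := by
  set M : Matrix (Fin p → Fin n) (Fin p → Fin n) ℝ :=
    Emat μ fun ω => kpow ((Y 1 ω)ᵀ * Y 1 ω) p with hM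
  set c : ℝ := opNorm M with hc
  have hc0 : 0 ≤ c := norm_nonneg _
  -- e in terms of evec
  have he : ∀ j, j ≤ k → ∀ ω, e j ω = evec e₀ j (fun i => Y i ω) := by
    intro j
    induction j with
    | zero => intro _ ω; rw [he0]; rfl
    | succ j ih =>
      intro hjk ω
      have h1 := herec ω (j+1) (Nat.succ_le_succ (Nat.zero_le j)) hjk
      simp only [Nat.add_sub_cancel] at h1
      rw [h1, ih (Nat.le_of_succ_le hjk) ω]
      rfl
  -- measurability of components of `e m`
  have hYtuple : Measurable (fun ω => (fun i => Y i ω : ℕ → Matrix (Fin n) (Fin n) ℝ)) :=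
    measurable_pi_lambda _ hmeas
  have hcomp : ∀ m, m ≤ k → ∀ a, Measurable (fun ω => e m ω a) := by
    intro m hm a
    have h : (fun ω => e m ω a) = fun ω => evec e₀ m (fun i => Y i ω) a := by
      funext ω; rw [he m hm ω]
    rw [h]
    exact (evec_meas e₀ m a).comp hYtuple
  have hnormmeas : ∀ m, m ≤ k → Measurable (fun ω => ‖e m ω‖ ^ (2 * p)) := by
    intro m hm
    have h : (fun ω => ‖e m ω‖ ^ (2 * p)) = fun ω => (∑ a, e m ω a ^ 2) ^ p := by
      funext ω; rw [pow_mul, euclid_normsq_s4]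
    rw [h]
    exact (Finset.measurable_sum _ fun a _ => (hcomp m hm a).pow_const 2).pow_const p
  have hprodmeas : ∀ m, m ≤ k → ∀ f : Fin p → Fin n,
      Measurable (fun ω => ∏ j, e m ω (f j)) := by
    intro m hm f
    exact Finset.measurable_prod _ fun j _ => hcomp m hm (f j)
  -- integrability and mean of kpow entries of Y m
  have hK_int : ∀ m, ∀ f g, Integrable (fun ω => kpow ((Y m ω)ᵀ * Y m ω) p f g) μ := by
    intro m f g
    have hφ := kentry_meas (n := n) (p := p) f g
    have h1 : Integrable (fun A => kpow (Aᵀ * A) p f g) (μ.map (Y m)) := by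
      rw [hident m]
      exact (integrable_map_measure hφ.aestronglyMeasurable
        (hmeas 1).aemeasurable).mpr (hint f g)
    exact (integrable_map_measure hφ.aestronglyMeasurable
      (hmeas m).aemeasurable).mp h1
  have hK_mean : ∀ m, ∀ f g, ∫ ω, kpow ((Y m ω)ᵀ * Y m ω) p f g ∂μ = M f g := by
    intro m f g
    have hφ := kentry_meas (n := n) (p := p) f g
    have h1 : ∫ ω, kpow ((Y m ω)ᵀ * Y m ω) p f g ∂μ
        = ∫ A, kpow (Aᵀ * A) p f g ∂(μ.map (Y m)) :=
      (integral_map (hmeas m).aemeasurable hφ.aestronglyMeasurable).symm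
    rw [h1, hident m, integral_map (hmeas 1).aemeasurable hφ.aestronglyMeasurable]
    rfl
  -- independence of kpow entry of Y (m+1) and products of entries of e m
  have hindep' : ∀ m, m + 1 ≤ k → ∀ f g f' g' : Fin p → Fin n,
      IndepFun (fun ω => kpow ((Y (m+1) ω)ᵀ * Y (m+1) ω) p f g)
        (fun ω => (∏ j, e m ω (f' j)) * (∏ j, e m ω (g' j))) μ := by
    intro m hmk f g f' g'
    have hdisj : Disjoint ({m+1} : Finset ℕ) (Finset.range (m+1)) := by
      simp [Finset.disjoint_singleton_left]
    have base := hindep.indepFun_finset {m+1} (Finset.range (m+1)) hdisj hmeas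
    -- left composition
    set φ : (({m+1} : Finset ℕ) → Matrix (Fin n) (Fin n) ℝ) → ℝ :=
      fun t => kpow ((t ⟨m+1, Finset.mem_singleton_self _⟩)ᵀ
        * t ⟨m+1, Finset.mem_singleton_self _⟩) p f g with hφdef
    have hφmeas : Measurable φ :=
      (kentry_meas f g).comp (measurable_pi_apply _)
    -- right composition
    set F : ((Finset.range (m+1) : Finset ℕ) → Matrix (Fin n) (Fin n) ℝ) → ℝ :=
      fun t =>
        (∏ j, evec e₀ m (fun i => if h : i ∈ Finset.range (m+1) then t ⟨i, h⟩ else 0) (f' j))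
        * (∏ j, evec e₀ m (fun i => if h : i ∈ Finset.range (m+1) then t ⟨i, h⟩ else 0) (g' j))
      with hFdef
    have hext : Measurable (fun t : ((Finset.range (m+1) : Finset ℕ) → Matrix (Fin n) (Fin n) ℝ)
        => (fun i => if h : i ∈ Finset.range (m+1) then t ⟨i, h⟩ else 0 :
            ℕ → Matrix (Fin n) (Fin n) ℝ)) := by
      refine measurable_pi_lambda _ fun i => ?_
      by_cases h : i ∈ Finset.range (m+1)
      · simpa [h] using measurable_pi_apply (⟨i, h⟩ : (Finset.range (m+1) : Finset ℕ))
      · simpa [h] using (measurable_const :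
          Measurable fun _ : ((Finset.range (m+1) : Finset ℕ) → Matrix (Fin n) (Fin n) ℝ)
            => (0 : Matrix (Fin n) (Fin n) ℝ))
    have hFmeas : Measurable F := by
      refine Measurable.mul ?_ ?_ <;>
        exact (Finset.measurable_prod _ fun j _ => (evec_meas e₀ m _).comp hext)
    have hcompd := base.comp hφmeas hFmeas
    have hleft : (φ ∘ fun ω (i : ({m+1} : Finset ℕ)) => Y i ω)
        = fun ω => kpow ((Y (m+1) ω)ᵀ * Y (m+1) ω) p f g := rfl
    have hright : (F ∘ fun ω (i : (Finset.range (m+1) : Finset ℕ)) => Y i ω)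
        = fun ω => (∏ j, e m ω (f' j)) * (∏ j, e m ω (g' j)) := by
      funext ω
      have hevec : evec e₀ m (fun i => if h : i ∈ Finset.range (m+1) then Y i ω else 0)
          = evec e₀ m (fun i => Y i ω) := by
        refine evec_congr e₀ m fun i hi => ?_
        have : i ∈ Finset.range (m+1) := Finset.mem_range.mpr (Nat.lt_succ_of_le hi)
        simp [this]
      simp only [Function.comp, hFdef]
      rw [hevec, ← he m (Nat.le_of_succ_le hmk) ω]
    rw [hleft, hright] at hcompd
    exact hcompd
  -- the main induction
  have main : ∀ m, m ≤ k →
      Integrable (fun ω => ‖e m ω‖ ^ (2 * p)) μ ∧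
      ∫ ω, ‖e m ω‖ ^ (2 * p) ∂μ ≤ c ^ m * ‖e₀‖ ^ (2 * p) := by
    intro m
    induction m with
    | zero =>
      intro _
      constructor
      · simpa [he0] using (integrable_const (‖e₀‖ ^ (2 * p)) : Integrable _ μ)
      · simp [he0]
    | succ m ih =>
      intro hmk
      obtain ⟨ihint, ihle⟩ := ih (Nat.le_of_succ_le hmk)
      have hmk' : m ≤ k := Nat.le_of_succ_le hmk
      -- expansion of the norm
      have hexp : ∀ ω, ‖e (m+1) ω‖ ^ (2 * p)
          = ∑ q : (Fin p → Fin n) × (Fin p → Fin n),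
              kpow ((Y (m+1) ω)ᵀ * Y (m+1) ω) p q.1 q.2 *
                ((∏ j, e m ω (q.1 j)) * (∏ j, e m ω (q.2 j))) := by
        intro ω
        have h1 := herec ω (m+1) (Nat.succ_le_succ (Nat.zero_le m)) hmk
        simp only [Nat.add_sub_cancel] at h1
        rw [h1, norm_pow_expand]
        exact (Fintype.sum_prod_type (f := fun q : (Fin p → Fin n) × (Fin p → Fin n) =>
          kpow ((Y (m+1) ω)ᵀ * Y (m+1) ω) p q.1 q.2 *
            ((∏ j, e m ω (q.1 j)) * (∏ j, e m ω (q.2 j))))).symm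
      -- integrability of the product terms
      have hPint : ∀ f' g' : Fin p → Fin n,
          Integrable (fun ω => (∏ j, e m ω (f' j)) * (∏ j, e m ω (g' j))) μ := by
        intro f' g'
        refine ihint.mono ((hprodmeas m hmk' f').mul (hprodmeas m hmk' g')
          ).aestronglyMeasurable (Filter.Eventually.of_forall fun ω => ?_)
        rw [Real.norm_eq_abs, Real.norm_eq_abs,
          abs_of_nonneg (a := ‖e m ω‖ ^ (2 * p)) (by positivity), abs_mul,
          Finset.abs_prod, Finset.abs_prod]
        have hb : ∀ a, |e m ω a| ≤ ‖e m ω‖ := fun a => coord_le_norm _ _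
        calc (∏ j, |e m ω (f' j)|) * (∏ j, |e m ω (g' j)|)
            ≤ (∏ _j : Fin p, ‖e m ω‖) * (∏ _j : Fin p, ‖e m ω‖) := by
              gcongr <;> first
                | exact Finset.prod_nonneg fun j _ => abs_nonneg _
                | exact hb _
          _ = ‖e m ω‖ ^ (2 * p) := by
              simp [Finset.prod_const, ← pow_add, two_mul]
      -- integrability of each summand
      have hsummand : ∀ q : (Fin p → Fin n) × (Fin p → Fin n),
          Integrable (fun ω => kpow ((Y (m+1) ω)ᵀ * Y (m+1) ω) p q.1 q.2 *
            ((∏ j, e m ω (q.1 j)) * (∏ j, e m ω (q.2 j)))) μ := by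
        intro q
        exact (hindep' m hmk q.1 q.2 q.1 q.2).integrable_mul
          (hK_int (m+1) q.1 q.2) (hPint q.1 q.2)
      have hint1 : Integrable (fun ω => ‖e (m+1) ω‖ ^ (2 * p)) μ := by
        have h : (fun ω => ‖e (m+1) ω‖ ^ (2 * p))
            = fun ω => ∑ q : (Fin p → Fin n) × (Fin p → Fin n),
                kpow ((Y (m+1) ω)ᵀ * Y (m+1) ω) p q.1 q.2 *
                  ((∏ j, e m ω (q.1 j)) * (∏ j, e m ω (q.2 j))) := funext hexp
        rw [h]
        exact integrable_finset_sum _ fun q _ => hsummand q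
      refine ⟨hint1, ?_⟩
      -- compute the integral
      have step1 : ∫ ω, ‖e (m+1) ω‖ ^ (2 * p) ∂μ
          = ∑ q : (Fin p → Fin n) × (Fin p → Fin n),
              M q.1 q.2 * ∫ ω, (∏ j, e m ω (q.1 j)) * (∏ j, e m ω (q.2 j)) ∂μ := by
        calc ∫ ω, ‖e (m+1) ω‖ ^ (2 * p) ∂μ
            = ∑ q : (Fin p → Fin n) × (Fin p → Fin n),
              ∫ ω, kpow ((Y (m+1) ω)ᵀ * Y (m+1) ω) p q.1 q.2 *
                ((∏ j, e m ω (q.1 j)) * (∏ j, e m ω (q.2 j))) ∂μ := by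
              rw [← integral_finset_sum _ fun q _ => hsummand q]
              exact integral_congr_ae (Filter.Eventually.of_forall hexp)
          _ = ∑ q : (Fin p → Fin n) × (Fin p → Fin n),
              M q.1 q.2 * ∫ ω, (∏ j, e m ω (q.1 j)) * (∏ j, e m ω (q.2 j)) ∂μ := by
              refine Finset.sum_congr rfl fun q _ => ?_
              have hmul := (hindep' m hmk q.1 q.2 q.1 q.2).integral_fun_mul_eq_mul_integral
                (hK_int (m+1) q.1 q.2).aestronglyMeasurable (hPint q.1 q.2).aestronglyMeasurable
              rw [← hK_mean (m+1) q.1 q.2]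
              exact hmul
      have step2 : ∑ q : (Fin p → Fin n) × (Fin p → Fin n),
            M q.1 q.2 * ∫ ω, (∏ j, e m ω (q.1 j)) * (∏ j, e m ω (q.2 j)) ∂μ
          = ∫ ω, ∑ q : (Fin p → Fin n) × (Fin p → Fin n),
              M q.1 q.2 * ((∏ j, e m ω (q.1 j)) * (∏ j, e m ω (q.2 j))) ∂μ := by
        rw [integral_finset_sum _ fun q _ => (hPint q.1 q.2).const_mul _]
        exact Finset.sum_congr rfl fun q _ => (integral_const_mul _ _).symm
      have step3 : ∫ ω, ∑ q : (Fin p → Fin n) × (Fin p → Fin n),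
              M q.1 q.2 * ((∏ j, e m ω (q.1 j)) * (∏ j, e m ω (q.2 j))) ∂μ
          ≤ ∫ ω, c * ‖e m ω‖ ^ (2 * p) ∂μ := by
        refine integral_mono (integrable_finset_sum _ fun q _ =>
          (hPint q.1 q.2).const_mul _) (ihint.const_mul c) fun ω => ?_
        rw [Fintype.sum_prod_type]
        exact quad_bound' M (e m ω)
      calc ∫ ω, ‖e (m+1) ω‖ ^ (2 * p) ∂μ
          ≤ ∫ ω, c * ‖e m ω‖ ^ (2 * p) ∂μ := by rw [step1, step2]; exact step3
        _ = c * ∫ ω, ‖e m ω‖ ^ (2 * p) ∂μ := integral_const_mul _ _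
        _ ≤ c * (c ^ m * ‖e₀‖ ^ (2 * p)) := by
            exact mul_le_mul_of_nonneg_left ihle hc0
        _ = c ^ (m+1) * ‖e₀‖ ^ (2 * p) := by ring
  exact (main k le_rfl).2
end

section
/- Let $\mathbf{Y}$ be a random symmetric $n \times n$ matrix satisfying $\mathbf{0} \preceq \mathbf{Y} \preceq \mathbf{I}$ almost surely (positive semidefinite contraction). Then $\|\mathbb{E}[\mathbf{Y} \otimes \mathbf{Y}]\| \le \|\mathbb{E}[\mathbf{Y}]\|$, where $\otimes$ is the Kronecker product and $\|\cdot\|$ the operator norm. -/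
open MeasureTheory ProbabilityTheory Matrix Metric
open scoped Kronecker RealInnerProductSpace

lemma clm_norm_le_of_pos {E : Type*} [NormedAddCommGroup E] [InnerProductSpace ℝ E]
    [CompleteSpace E] (T : E →L[ℝ] E) (hT : T.IsPositive) {c : ℝ} (hc : 0 ≤ c)
    (h : ∀ x : E, ⟪T x, x⟫ ≤ c * ‖x‖ ^ 2) : ‖T‖ ≤ c := by
  refine T.opNorm_le_bound hc fun x => ?_
  rcases eq_or_ne (T x) 0 with h0 | h0
  · simp [h0]
    positivity
  have hx : x ≠ 0 := fun hx => h0 (by simp [hx])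
  set y : E := (‖x‖ / ‖T x‖) • T x with hy
  have hny : ‖y‖ = ‖x‖ := by
    rw [hy, norm_smul, norm_div, norm_norm, norm_norm, div_mul_cancel₀]
    exact norm_ne_zero_iff.mpr h0
  have hsym := (ContinuousLinearMap.isSelfAdjoint_iff_isSymmetric.mp hT.isSelfAdjoint)
  have h1 : ⟪T y, x⟫ = ⟪T x, y⟫ := (hsym y x).trans (real_inner_comm _ _)
  have key : 4 * ⟪T x, y⟫ = ⟪T (x + y), x + y⟫ - ⟪T (x - y), x - y⟫ := by
    simp only [map_add, map_sub, inner_add_left, inner_add_right, inner_sub_left,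
      inner_sub_right, h1]
    ring
  have hpos2 : 0 ≤ ⟪T (x - y), x - y⟫ := by
    have := hT.inner_nonneg_left (x - y)
    simpa [real_inner_comm] using this
  have hb : ⟪T (x + y), x + y⟫ ≤ c * ‖x + y‖ ^ 2 := h _
  have hxy : ‖x + y‖ ^ 2 ≤ (2 * ‖x‖) ^ 2 := by
    have h2 := norm_add_le x y
    rw [hny] at h2
    nlinarith [norm_nonneg (x + y), norm_nonneg x]
  have h4 : ⟪T x, y⟫ ≤ c * ‖x‖ ^ 2 := by nlinarith
  have hip : ⟪T x, y⟫ = ‖x‖ * ‖T x‖ := by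
    have hTx : ‖T x‖ ≠ 0 := norm_ne_zero_iff.mpr h0
    rw [hy, real_inner_smul_right, real_inner_self_eq_norm_sq]
    field_simp [pow_two]
  have hxpos : 0 < ‖x‖ := norm_pos_iff.mpr hx
  nlinarith

lemma int_dot {Ω : Type*} [MeasurableSpace Ω] (μ : Measure Ω) {ι : Type*} [Fintype ι]
    (X : Ω → Matrix ι ι ℝ) (hX : ∀ i j, Integrable (fun ω => X ω i j) μ) (x : ι → ℝ) :
    Integrable (fun ω => x ⬝ᵥ (X ω *ᵥ x)) μ := by
  simp only [dotProduct, mulVec]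
  apply integrable_finset_sum
  intro i _
  exact (integrable_finset_sum _ fun j _ => (hX i j).mul_const (x j)).const_mul (x i)

lemma dot_Emat {Ω : Type*} [MeasurableSpace Ω] (μ : Measure Ω) {ι : Type*} [Fintype ι]
    (X : Ω → Matrix ι ι ℝ) (hX : ∀ i j, Integrable (fun ω => X ω i j) μ) (x : ι → ℝ) :
    x ⬝ᵥ (Emat μ X *ᵥ x) = ∫ ω, x ⬝ᵥ (X ω *ᵥ x) ∂μ := by
  simp only [dotProduct, mulVec, Emat, Matrix.of_apply]
  have step : ∀ i ∈ Finset.univ, x i * ∑ j, (∫ ω, X ω i j ∂μ) * x j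
      = ∫ ω, x i * ∑ j, X ω i j * x j ∂μ := by
    intro i _
    calc x i * ∑ j, (∫ ω, X ω i j ∂μ) * x j
        = ∑ j, ∫ ω, x i * (X ω i j * x j) ∂μ := by
          rw [Finset.mul_sum]
          refine Finset.sum_congr rfl fun j _ => ?_
          rw [← integral_mul_const, ← integral_const_mul]
      _ = ∫ ω, x i * ∑ j, X ω i j * x j ∂μ := by
          rw [← integral_finset_sum _ fun j _ => ((hX i j).mul_const (x j)).const_mul (x i)]
          simp_rw [Finset.mul_sum]
  rw [Finset.sum_congr rfl step,
    ← integral_finset_sum _ (fun i _ =>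
      ((integrable_finset_sum _ fun j _ => (hX i j).mul_const (x j)).const_mul (x i)))]

lemma kron_psd {m k : Type*} [Fintype m] [Fintype k] [DecidableEq m] [DecidableEq k]
    {A : Matrix m m ℝ} {B : Matrix k k ℝ} (hA : A.PosSemidef) (hB : B.PosSemidef) :
    (A ⊗ₖ B).PosSemidef := by
  exact hA.kronecker hB

lemma inner_clm {ι : Type*} [Fintype ι] [DecidableEq ι] (A : Matrix ι ι ℝ) (x : ι → ℝ) :
    ⟪(Matrix.toEuclideanCLM (𝕜 := ℝ) A) ((WithLp.equiv 2 _).symm x),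
      (WithLp.equiv 2 _).symm x⟫ = (A *ᵥ x) ⬝ᵥ x := by
  rw [WithLp.equiv_symm_apply, Matrix.toEuclideanCLM_toLp]
  simp [PiLp.inner_apply, dotProduct, RCLike.inner_apply, Matrix.toLin'_apply, mul_comm]

lemma dot_le {ι : Type*} [Fintype ι] [DecidableEq ι] (M : Matrix ι ι ℝ) (x : ι → ℝ) :
    x ⬝ᵥ (M *ᵥ x) ≤ opNorm M * (x ⬝ᵥ x) := by
  set v : EuclideanSpace ℝ ι := (WithLp.equiv 2 _).symm x with hv
  have h := inner_clm M x
  have h1 : inner ℝ ((Matrix.toEuclideanCLM (𝕜 := ℝ) M) v) v ≤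
      ‖(Matrix.toEuclideanCLM (𝕜 := ℝ) M) v‖ * ‖v‖ := real_inner_le_norm _ _
  have h2 : ‖(Matrix.toEuclideanCLM (𝕜 := ℝ) M) v‖ ≤
      ‖Matrix.toEuclideanCLM (𝕜 := ℝ) M‖ * ‖v‖ := ContinuousLinearMap.le_opNorm _ _
  have h3 : x ⬝ᵥ x = ‖v‖ ^ 2 := by
    rw [← real_inner_self_eq_norm_sq]
    simp [PiLp.inner_apply, dotProduct, RCLike.inner_apply, hv]
    rw [EuclideanSpace.norm_eq, Real.sq_sqrt (by positivity)]
    simp [pow_two]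
  rw [dotProduct_comm, ← h, h3]
  show inner ℝ _ _ ≤ ‖Matrix.toEuclideanCLM (𝕜 := ℝ) M‖ * ‖v‖ ^ 2
  nlinarith [norm_nonneg v, norm_nonneg (Matrix.toEuclideanCLM (𝕜 := ℝ) M)]

lemma one_kron_dot {m k : Type*} [Fintype m] [Fintype k] [DecidableEq m]
    (M : Matrix k k ℝ) (x : m × k → ℝ) :
    x ⬝ᵥ ((1 ⊗ₖ M) *ᵥ x) = ∑ i : m, (fun a => x (i, a)) ⬝ᵥ (M *ᵥ fun a => x (i, a)) := by
  simp only [dotProduct, mulVec, Fintype.sum_prod_type, kroneckerMap_apply, Matrix.one_apply,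
    ite_mul, one_mul, zero_mul, Finset.mul_sum, mul_ite, mul_zero]
  refine Finset.sum_congr rfl fun i _ => ?_
  refine Finset.sum_congr rfl fun a _ => ?_
  rw [Finset.sum_comm]
  simp [Finset.sum_ite_eq]

lemma Emat_one_kron {Ω : Type*} [MeasurableSpace Ω] (μ : Measure Ω)
    {m k : Type*} [Fintype m] [Fintype k] [DecidableEq m]
    (X : Ω → Matrix k k ℝ) :
    Emat μ (fun ω => (1 : Matrix m m ℝ) ⊗ₖ X ω)
      = (1 : Matrix m m ℝ) ⊗ₖ (Emat μ X : Matrix k k ℝ) := by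
  ext ⟨i, a⟩ ⟨j, b⟩
  simp only [Emat, Matrix.of_apply, kroneckerMap_apply, Matrix.one_apply]
  by_cases h : i = j
  · simp [h]
  · simp [h]

/-- For a random symmetric psd contraction `Y` (i.e. `0 ⪯ Y ⪯ I` a.s.),
`‖𝔼[Y ⊗ Y]‖ ≤ ‖𝔼[Y]‖`. -/
theorem stmt8 {Ω : Type*} [MeasurableSpace Ω] (μ : Measure Ω) [IsProbabilityMeasure μ]
    {n : ℕ} (Y : Ω → Matrix (Fin n) (Fin n) ℝ)
    (hpsd : ∀ᵐ ω ∂μ, (Y ω).PosSemidef)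
    (hcontr : ∀ᵐ ω ∂μ, ((1 : Matrix (Fin n) (Fin n) ℝ) - Y ω).PosSemidef)
    (hint : ∀ i j, Integrable (fun ω => Y ω i j) μ)
    (hint2 : ∀ i j, Integrable (fun ω => (Y ω ⊗ₖ Y ω) i j) μ) :
    opNorm (Emat μ fun ω => Y ω ⊗ₖ Y ω) ≤ opNorm (Emat μ Y) := by
  classical
  set M : Matrix (Fin n) (Fin n) ℝ := Emat μ Y with hM
  set K : Matrix (Fin n × Fin n) (Fin n × Fin n) ℝ := Emat μ (fun ω => Y ω ⊗ₖ Y ω) with hK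
  have hint1' : ∀ (p q : Fin n × Fin n),
      Integrable (fun ω => ((1 : Matrix (Fin n) (Fin n) ℝ) ⊗ₖ Y ω) p q) μ := by
    rintro ⟨i, a⟩ ⟨j, b⟩
    simp only [kroneckerMap_apply, Matrix.one_apply]
    by_cases h : i = j
    · simpa [h] using hint a b
    · simp [h]
  have hE1 : Emat μ (fun ω => (1 : Matrix (Fin n) (Fin n) ℝ) ⊗ₖ Y ω)
      = (1 : Matrix (Fin n) (Fin n) ℝ) ⊗ₖ M := Emat_one_kron μ Y
  have hKpsd : K.PosSemidef := by
    refine PosSemidef.of_dotProduct_mulVec_nonneg ?_ ?_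
    · show Kᴴ = K
      ext p q
      rw [conjTranspose_apply]
      show star (∫ ω, (Y ω ⊗ₖ Y ω) q p ∂μ) = ∫ ω, (Y ω ⊗ₖ Y ω) p q ∂μ
      rw [star_trivial]
      refine integral_congr_ae ?_
      filter_upwards [hpsd] with ω hω
      have h2 := (kron_psd hω hω).1
      have := congrFun (congrFun h2 q) p
      rw [conjTranspose_apply, star_trivial] at this
      exact this.symm
    · intro x
      have hx : star x = x := by simp
      rw [hx]
      show 0 ≤ x ⬝ᵥ (Emat μ (fun ω => Y ω ⊗ₖ Y ω) *ᵥ x)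
      rw [dot_Emat μ _ hint2 x]
      refine integral_nonneg_of_ae ?_
      filter_upwards [hpsd] with ω hω
      have := (kron_psd hω hω).dotProduct_mulVec_nonneg x
      simpa using this
  have hMnn : (0 : ℝ) ≤ opNorm M := norm_nonneg _
  have key : ∀ x : Fin n × Fin n → ℝ, x ⬝ᵥ (K *ᵥ x) ≤ opNorm M * (x ⬝ᵥ x) := by
    intro x
    have step1 : x ⬝ᵥ (K *ᵥ x) = ∫ ω, x ⬝ᵥ ((Y ω ⊗ₖ Y ω) *ᵥ x) ∂μ := dot_Emat μ _ hint2 x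
    have step2 : (∫ ω, x ⬝ᵥ ((Y ω ⊗ₖ Y ω) *ᵥ x) ∂μ)
        ≤ ∫ ω, x ⬝ᵥ (((1 : Matrix (Fin n) (Fin n) ℝ) ⊗ₖ Y ω) *ᵥ x) ∂μ := by
      refine integral_mono_ae (int_dot μ _ hint2 x) (int_dot μ _ hint1' x) ?_
      filter_upwards [hpsd, hcontr] with ω h1 h2
      have hp := (kron_psd h2 h1).dotProduct_mulVec_nonneg x
      have hsub : ((1 : Matrix (Fin n) (Fin n) ℝ) - Y ω) ⊗ₖ Y ω
          = (1 : Matrix (Fin n) (Fin n) ℝ) ⊗ₖ Y ω - Y ω ⊗ₖ Y ω := by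
        ext ⟨i, a⟩ ⟨j, b⟩
        simp [kroneckerMap_apply, Matrix.sub_apply, sub_mul]
      rw [hsub] at hp
      simp only [Matrix.sub_mulVec, dotProduct_sub, star_trivial] at hp
      linarith
    have step3 : (∫ ω, x ⬝ᵥ (((1 : Matrix (Fin n) (Fin n) ℝ) ⊗ₖ Y ω) *ᵥ x) ∂μ)
        = x ⬝ᵥ (((1 : Matrix (Fin n) (Fin n) ℝ) ⊗ₖ M) *ᵥ x) := by
      rw [← dot_Emat μ _ hint1' x, hE1]
    calc x ⬝ᵥ (K *ᵥ x) ≤ x ⬝ᵥ (((1 : Matrix (Fin n) (Fin n) ℝ) ⊗ₖ M) *ᵥ x) := by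
          rw [step1, ← step3]; exact step2
      _ = ∑ i : Fin n, (fun a => x (i, a)) ⬝ᵥ (M *ᵥ fun a => x (i, a)) := one_kron_dot M x
      _ ≤ ∑ i : Fin n, opNorm M * ((fun a => x (i, a)) ⬝ᵥ fun a => x (i, a)) :=
          Finset.sum_le_sum fun i _ => dot_le M _
      _ = opNorm M * (x ⬝ᵥ x) := by
          rw [← Finset.mul_sum]
          congr 1
          simp [dotProduct, Fintype.sum_prod_type]
  show ‖Matrix.toEuclideanCLM (𝕜 := ℝ) K‖ ≤ opNorm M
  have hsa : _root_.IsSelfAdjoint (Matrix.toEuclideanCLM (𝕜 := ℝ) K) := by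
    rw [_root_.IsSelfAdjoint, ← map_star]
    exact congrArg _ hKpsd.1
  have hiner : ∀ v : EuclideanSpace ℝ (Fin n × Fin n),
      ⟪(Matrix.toEuclideanCLM (𝕜 := ℝ) K) v, v⟫
        = (K *ᵥ (WithLp.equiv 2 _ v)) ⬝ᵥ (WithLp.equiv 2 _ v) := by
    intro v
    have h5 := inner_clm K (WithLp.equiv 2 _ v)
    simpa using h5
  have hpos : (Matrix.toEuclideanCLM (𝕜 := ℝ) K).IsPositive := by
    refine ⟨ContinuousLinearMap.isSelfAdjoint_iff_isSymmetric.mp hsa, fun v => ?_⟩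
    show (0 : ℝ) ≤ (Matrix.toEuclideanCLM (𝕜 := ℝ) K).reApplyInnerSelf v
    have : (Matrix.toEuclideanCLM (𝕜 := ℝ) K).reApplyInnerSelf v
        = ⟪(Matrix.toEuclideanCLM (𝕜 := ℝ) K) v, v⟫ := rfl
    rw [this, hiner v, dotProduct_comm]
    have := hKpsd.dotProduct_mulVec_nonneg (WithLp.equiv 2 _ v)
    simpa using this
  refine clm_norm_le_of_pos _ hpos hMnn fun v => ?_
  rw [hiner v, dotProduct_comm]
  have hnv : (WithLp.equiv 2 _ v) ⬝ᵥ (WithLp.equiv 2 _ v) = ‖v‖ ^ 2 := by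
    rw [← real_inner_self_eq_norm_sq]
    simp [PiLp.inner_apply, dotProduct, RCLike.inner_apply]
    rw [EuclideanSpace.norm_eq, Real.sq_sqrt (by positivity)]
    simp [pow_two]
  rw [← hnv]
  exact key _
end
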